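/- Let H be a Hopf algebra with a symmetric left partial action on an algebra A. The map π : H → End(A) defined by π(h)(a) = h·a is a partial representation of H in the endomorphism algebra End(A). -/

import Mathlib

set_option synthInstance.maxHeartbeats 1000000
set_option maxHeartbeats 1000000

open TensorProduct

/-- Sweedler-style sum `h ↦ Σ f(h₍₁₎) * g(h₍₂₎)` for linear maps `f g : H →ₗ[k] A`,
with respect to a bilinear multiplication `mul` on `A`. -/
noncomputable def sweedler {k H A : Type*} [CommRing k] [Ring H] [HopfAlgebra k H]
    [AddCommGroup A] [Module k A]
    (mul : A →ₗ[k] A →ₗ[k] A) (f g : H →ₗ[k] A) : H →ₗ[k] A :=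
  TensorProduct.lift ((mul ∘ₗ f).compl₂ g) ∘ₗ Coalgebra.comul

/-- A symmetric left partial action of a Hopf algebra `H` on a unital `k`-algebra `A`:
(LPA1) `1_H · a = a`; (LPA2) `h·(ab) = (h₍₁₎·a)(h₍₂₎·b)`;
(LPA3) `h·(g·a) = (h₍₁₎·1)(h₍₂₎g·a) = (h₍₁₎g·a)(h₍₂₎·1)`. -/
structure IsLeftPartialAction (k : Type*) {H A : Type*} [CommRing k] [Ring H]
    [HopfAlgebra k H] [Ring A] [Algebra k A]
    (act : H →ₗ[k] A →ₗ[k] A) : Prop where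
  lpa1 : ∀ a : A, act 1 a = a
  lpa2 : ∀ (h : H) (a b : A),
    act h (a * b) = sweedler (LinearMap.mul k A) (act.flip a) (act.flip b) h
  lpa3 : ∀ (h g : H) (a : A),
    act h (act g a) =
      sweedler (LinearMap.mul k A) (act.flip 1)
        ((act.flip a) ∘ₗ LinearMap.mulRight k g) h
  lpa3' : ∀ (h g : H) (a : A),
    act h (act g a) =
      sweedler (LinearMap.mul k A) ((act.flip a) ∘ₗ LinearMap.mulRight k g)
        (act.flip 1) h

/-- A partial representation of a Hopf algebra `H` in a unital algebra `B`:
(PR1) `π(1) = 1`; (PR2) `π(h)π(k₍₁₎)π(S(k₍₂₎)) = π(hk₍₁₎)π(S(k₍₂₎))`;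
(PR3) `π(h₍₁₎)π(S(h₍₂₎))π(g) = π(h₍₁₎)π(S(h₍₂₎)g)`. -/
structure IsPartialRep (k : Type*) {H B : Type*} [CommRing k] [Ring H] [HopfAlgebra k H]
    [Ring B] [Algebra k B] (π : H →ₗ[k] B) : Prop where
  pr1 : π 1 = 1
  pr2 : ∀ h kk : H,
    sweedler (LinearMap.mul k B) ((LinearMap.mulLeft k (π h)) ∘ₗ π)
      (π ∘ₗ (HopfAlgebra.antipode k : H →ₗ[k] H)) kk =
    sweedler (LinearMap.mul k B) (π ∘ₗ LinearMap.mulLeft k h)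
      (π ∘ₗ (HopfAlgebra.antipode k : H →ₗ[k] H)) kk
  pr3 : ∀ h g : H,
    sweedler (LinearMap.mul k B) π (π ∘ₗ (HopfAlgebra.antipode k : H →ₗ[k] H)) h * π g =
    sweedler (LinearMap.mul k B) π
      (π ∘ₗ LinearMap.mulRight k g ∘ₗ (HopfAlgebra.antipode k : H →ₗ[k] H)) h

section Aux

variable {k H : Type*} [CommRing k] [Ring H] [HopfAlgebra k H]

lemma sweedler_mul_eq {B : Type*} [Ring B] [Algebra k B] (f g : H →ₗ[k] B) :
    sweedler (LinearMap.mul k B) f g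
      = LinearMap.mul' k B ∘ₗ TensorProduct.map f g ∘ₗ Coalgebra.comul := by
  unfold sweedler
  rw [← LinearMap.comp_assoc]
  congr 1
  apply TensorProduct.ext'
  intro u v
  simp [LinearMap.mul'_apply]

lemma sweedler_mul_apply {B : Type*} [Ring B] [Algebra k B] (f g : H →ₗ[k] B) (x : H) :
    sweedler (LinearMap.mul k B) f g x
      = LinearMap.mul' k B (TensorProduct.map f g (Coalgebra.comul x)) := by
  rw [sweedler_mul_eq]; rfl

/-- The map `u ⊗ v ↦ Σ u₍₁₎ ⊗ u₍₂₎ * S(v)`. -/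
noncomputable def Dmap (k H : Type*) [CommRing k] [Ring H] [HopfAlgebra k H] :
    H ⊗[k] H →ₗ[k] H ⊗[k] H :=
  (LinearMap.mul' k H).lTensor H
    ∘ₗ ↑(TensorProduct.assoc k H H H)
    ∘ₗ (Coalgebra.comul (R := k) (A := H)).rTensor H
    ∘ₗ (HopfAlgebra.antipode (R := k) (A := H)).lTensor H

lemma lTensor_mul'_assoc (w : H ⊗[k] H) (z : H) :
    (LinearMap.mul' k H).lTensor H ((TensorProduct.assoc k H H H) (w ⊗ₜ z))
      = (LinearMap.mulRight k z).lTensor H w := by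
  induction w using TensorProduct.induction_on with
  | zero => rw [zero_tmul, map_zero, map_zero, map_zero]
  | tmul x y => simp [LinearMap.mul'_apply]
  | add w₁ w₂ h1 h2 => rw [add_tmul, map_add, map_add, map_add, h1, h2]

lemma Dmap_tmul (u v : H) :
    Dmap k H (u ⊗ₜ v)
      = (LinearMap.mulRight k (HopfAlgebra.antipode (R := k) v)).lTensor H
          (Coalgebra.comul u) := by
  simp only [Dmap, LinearMap.comp_apply, LinearMap.lTensor_tmul, LinearMap.rTensor_tmul,
    LinearEquiv.coe_coe]
  exact lTensor_mul'_assoc _ _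

lemma lTensor_mulRight_mul (z : H) (w w' : H ⊗[k] H) :
    (LinearMap.mulRight k z).lTensor H (w * w')
      = w * (LinearMap.mulRight k z).lTensor H w' := by
  induction w using TensorProduct.induction_on with
  | zero => rw [zero_mul, map_zero, zero_mul]
  | tmul p q =>
    induction w' using TensorProduct.induction_on with
    | zero => rw [mul_zero, map_zero, mul_zero]
    | tmul x y =>
      simp [Algebra.TensorProduct.tmul_mul_tmul, mul_assoc]
    | add t₁ t₂ g1 g2 => rw [mul_add, map_add, map_add, g1, g2, mul_add]
  | add w₁ w₂ h1 h2 => rw [add_mul, map_add, h1, h2, add_mul]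

lemma rTensor_mulRight_eq (z : H) (w : H ⊗[k] H) :
    (LinearMap.mulRight k z).rTensor H w = w * (z ⊗ₜ (1 : H)) := by
  induction w using TensorProduct.induction_on with
  | zero => rw [map_zero, zero_mul]
  | tmul p q => simp [Algebra.TensorProduct.tmul_mul_tmul]
  | add w₁ w₂ h1 h2 => rw [map_add, h1, h2, add_mul]

lemma map_comp_rTensor' {A : Type*} [AddCommGroup A] [Module k A]
    (f g : H →ₗ[k] A) (r : H →ₗ[k] H) :
    TensorProduct.map (f ∘ₗ r) g = TensorProduct.map f g ∘ₗ r.rTensor H := by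
  apply TensorProduct.ext'
  intro u v
  simp

lemma map_comp_lTensor' {A : Type*} [AddCommGroup A] [Module k A]
    (f g : H →ₗ[k] A) (r : H →ₗ[k] H) :
    TensorProduct.map f (g ∘ₗ r) = TensorProduct.map f g ∘ₗ r.lTensor H := by
  apply TensorProduct.ext'
  intro u v
  simp

lemma Dmap_comp_comul :
    Dmap k H ∘ₗ (Coalgebra.comul (R := k) (A := H))
      = (TensorProduct.mk k H H).flip 1 := by
  set C := Coalgebra.comul (R := k) (A := H) with hC
  set S := HopfAlgebra.antipode (R := k) (A := H) with hSdef
  have hS : C.rTensor H ∘ₗ S.lTensor H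
      = S.lTensor (H ⊗[k] H) ∘ₗ C.rTensor H := by
    rw [LinearMap.rTensor_comp_lTensor, LinearMap.lTensor_comp_rTensor]
  have hA : (↑(TensorProduct.assoc k H H H) :
        (H ⊗[k] H) ⊗[k] H →ₗ[k] H ⊗[k] (H ⊗[k] H)) ∘ₗ S.lTensor (H ⊗[k] H)
      = ((S.lTensor H).lTensor H) ∘ₗ ↑(TensorProduct.assoc k H H H) := by
    apply TensorProduct.ext_threefold
    intro x y z
    simp
  calc Dmap k H ∘ₗ C
      = (LinearMap.mul' k H).lTensor H ∘ₗ ↑(TensorProduct.assoc k H H H)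
          ∘ₗ ((C.rTensor H ∘ₗ S.lTensor H) ∘ₗ C) := by
        unfold Dmap; simp only [LinearMap.comp_assoc, hC, hSdef]
    _ = (LinearMap.mul' k H).lTensor H ∘ₗ ↑(TensorProduct.assoc k H H H)
          ∘ₗ ((S.lTensor (H ⊗[k] H) ∘ₗ C.rTensor H) ∘ₗ C) := by rw [hS]
    _ = (LinearMap.mul' k H).lTensor H
          ∘ₗ ((↑(TensorProduct.assoc k H H H) ∘ₗ S.lTensor (H ⊗[k] H))
          ∘ₗ (C.rTensor H ∘ₗ C)) := by simp only [LinearMap.comp_assoc]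
    _ = (LinearMap.mul' k H).lTensor H
          ∘ₗ ((((S.lTensor H).lTensor H) ∘ₗ ↑(TensorProduct.assoc k H H H))
          ∘ₗ (C.rTensor H ∘ₗ C)) := by rw [hA]
    _ = (((LinearMap.mul' k H).lTensor H ∘ₗ (S.lTensor H).lTensor H)
          ∘ₗ (↑(TensorProduct.assoc k H H H) ∘ₗ C.rTensor H ∘ₗ C)) := by
        simp only [LinearMap.comp_assoc]
    _ = (((LinearMap.mul' k H).lTensor H ∘ₗ (S.lTensor H).lTensor H)
          ∘ₗ (C.lTensor H ∘ₗ C)) := by rw [Coalgebra.coassoc]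
    _ = ((LinearMap.mul' k H ∘ₗ S.lTensor H ∘ₗ C).lTensor H) ∘ₗ C := by
        rw [LinearMap.lTensor_comp, LinearMap.lTensor_comp]
        simp only [LinearMap.comp_assoc]
    _ = ((Algebra.linearMap k H ∘ₗ Coalgebra.counit).lTensor H) ∘ₗ C := by
        rw [hSdef, hC, HopfAlgebra.mul_antipode_lTensor_comul]
    _ = (Algebra.linearMap k H).lTensor H
          ∘ₗ ((Coalgebra.counit : H →ₗ[k] k).lTensor H ∘ₗ C) := by
        rw [LinearMap.lTensor_comp, LinearMap.comp_assoc]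
    _ = (Algebra.linearMap k H).lTensor H ∘ₗ (TensorProduct.mk k H k).flip 1 := by
        rw [hC, Coalgebra.lTensor_counit_comp_comul]
    _ = (TensorProduct.mk k H H).flip 1 := by
        apply LinearMap.ext
        intro x
        simp

lemma Dmap_comul_apply (x : H) :
    Dmap k H (Coalgebra.comul x) = x ⊗ₜ (1 : H) :=
  DFunLike.congr_fun Dmap_comp_comul x

lemma Dmap_comp_mulLeft (h : H) :
    Dmap k H ∘ₗ (LinearMap.mulLeft k h).rTensor H
      = LinearMap.mulLeft k (Coalgebra.comul (R := k) h) ∘ₗ Dmap k H := by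
  apply TensorProduct.ext'
  intro u v
  simp only [LinearMap.comp_apply, LinearMap.rTensor_tmul, LinearMap.mulLeft_apply]
  rw [Dmap_tmul, Dmap_tmul, Bialgebra.comul_mul, lTensor_mulRight_mul]

end Aux

section ActAux

variable {k H A : Type*} [CommRing k] [Ring H] [HopfAlgebra k H] [Ring A] [Algebra k A]

/-- Core computation: the `End(A)`-valued Sweedler sum `Σ π(x₍₁₎)π(S x₍₂₎)`, evaluated at
`b : A`, as a composition through `Dmap`. -/
lemma coreMapG (act : H →ₗ[k] A →ₗ[k] A) (hact : IsLeftPartialAction k act) (g : H) (b : A) :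
    (LinearMap.applyₗ (R := k) b) ∘ₗ TensorProduct.lift
        ((LinearMap.mul k (Module.End k A) ∘ₗ (act : H →ₗ[k] Module.End k A)).compl₂
          ((act : H →ₗ[k] Module.End k A) ∘ₗ LinearMap.mulRight k g
            ∘ₗ (HopfAlgebra.antipode k : H →ₗ[k] H)))
      = LinearMap.mul' k A
          ∘ₗ TensorProduct.map (act.flip 1) (act.flip b ∘ₗ LinearMap.mulRight k g)
          ∘ₗ Dmap k H := by
  apply TensorProduct.ext'
  intro u v
  simp only [LinearMap.comp_apply, TensorProduct.lift.tmul, LinearMap.compl₂_apply,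
    LinearMap.mul_apply', LinearMap.applyₗ_apply_apply, LinearMap.mulRight_apply,
    Module.End.mul_apply]
  rw [hact.lpa3 u (HopfAlgebra.antipode (R := k) v * g) b]
  rw [sweedler_mul_apply]
  rw [Dmap_tmul]
  rw [show (act.flip b) ∘ₗ LinearMap.mulRight k (HopfAlgebra.antipode (R := k) v * g)
      = ((act.flip b) ∘ₗ LinearMap.mulRight k g)
          ∘ₗ LinearMap.mulRight k (HopfAlgebra.antipode (R := k) v) by
    rw [LinearMap.mulRight_mul]; rfl]
  rw [map_comp_lTensor']
  rfl

lemma coreMap0 (act : H →ₗ[k] A →ₗ[k] A) (hact : IsLeftPartialAction k act) (b : A) :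
    (LinearMap.applyₗ (R := k) b) ∘ₗ TensorProduct.lift
        ((LinearMap.mul k (Module.End k A) ∘ₗ (act : H →ₗ[k] Module.End k A)).compl₂
          ((act : H →ₗ[k] Module.End k A) ∘ₗ (HopfAlgebra.antipode k : H →ₗ[k] H)))
      = LinearMap.mul' k A
          ∘ₗ TensorProduct.map (act.flip 1) (act.flip b)
          ∘ₗ Dmap k H := by
  have h := coreMapG act hact (1 : H) b
  rw [LinearMap.mulRight_one] at h
  simpa using h

end ActAux

section ActAux2

variable {k H A : Type*} [CommRing k] [Ring H] [HopfAlgebra k H] [Ring A] [Algebra k A]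

lemma coreMapL (act : H →ₗ[k] A →ₗ[k] A) (hact : IsLeftPartialAction k act)
    (h : H) (a : A) :
    (LinearMap.applyₗ (R := k) a) ∘ₗ TensorProduct.lift
        ((LinearMap.mul k (Module.End k A)
            ∘ₗ (LinearMap.mulLeft k ((act : H →ₗ[k] Module.End k A) h)
                ∘ₗ (act : H →ₗ[k] Module.End k A))).compl₂
          ((act : H →ₗ[k] Module.End k A) ∘ₗ (HopfAlgebra.antipode k : H →ₗ[k] H)))
      = (act h : A →ₗ[k] A)
          ∘ₗ (LinearMap.mul' k A
              ∘ₗ TensorProduct.map (act.flip 1) (act.flip a) ∘ₗ Dmap k H) := by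
  apply TensorProduct.ext'
  intro u v
  have h0 := DFunLike.congr_fun (coreMap0 act hact a) (u ⊗ₜ[k] v)
  simp only [LinearMap.comp_apply, TensorProduct.lift.tmul, LinearMap.compl₂_apply,
    LinearMap.mul_apply', LinearMap.applyₗ_apply_apply, Module.End.mul_apply,
    LinearMap.mulLeft_apply] at h0 ⊢
  rw [h0]

lemma coreMapR (act : H →ₗ[k] A →ₗ[k] A) (hact : IsLeftPartialAction k act)
    (h : H) (a : A) :
    (LinearMap.applyₗ (R := k) a) ∘ₗ TensorProduct.lift
        ((LinearMap.mul k (Module.End k A)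
            ∘ₗ ((act : H →ₗ[k] Module.End k A) ∘ₗ LinearMap.mulLeft k h)).compl₂
          ((act : H →ₗ[k] Module.End k A) ∘ₗ (HopfAlgebra.antipode k : H →ₗ[k] H)))
      = LinearMap.mul' k A
          ∘ₗ TensorProduct.map (act.flip 1) (act.flip a)
          ∘ₗ Dmap k H ∘ₗ (LinearMap.mulLeft k h).rTensor H := by
  apply TensorProduct.ext'
  intro u v
  have h0 := DFunLike.congr_fun (coreMap0 act hact a) ((h * u) ⊗ₜ[k] v)
  simp only [LinearMap.comp_apply, TensorProduct.lift.tmul, LinearMap.compl₂_apply,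
    LinearMap.mul_apply', LinearMap.applyₗ_apply_apply, Module.End.mul_apply,
    LinearMap.mulLeft_apply, LinearMap.rTensor_tmul] at h0 ⊢
  rw [h0]

lemma lemK (act : H →ₗ[k] A →ₗ[k] A) (hact : IsLeftPartialAction k act)
    (g : H) (a : A) :
    sweedler (LinearMap.mul k A) (act.flip ((act g) 1)) (act.flip a)
      = sweedler (LinearMap.mul k A)
          ((act.flip 1) ∘ₗ LinearMap.mulRight k g) (act.flip a) := by
  set C := Coalgebra.comul (R := k) (A := H) with hC
  set σ := (act.flip (1 : A)) ∘ₗ LinearMap.mulRight k g with hσ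
  set ω := act.flip (1 : A) with hω
  set αa := act.flip a with hαa
  set μ := LinearMap.mul' k A with hμ
  have hK1 : act.flip ((act g) 1) = μ ∘ₗ TensorProduct.map σ ω ∘ₗ C := by
    apply LinearMap.ext
    intro x
    simp only [LinearMap.flip_apply, LinearMap.comp_apply]
    rw [hact.lpa3' x g 1, sweedler_mul_apply]
  have hK2 : μ ∘ₗ TensorProduct.map ω αa ∘ₗ C = αa := by
    apply LinearMap.ext
    intro x
    have h2 := hact.lpa2 x 1 a
    rw [one_mul, sweedler_mul_apply] at h2
    simp only [LinearMap.comp_apply, hαa, LinearMap.flip_apply]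
    exact h2.symm
  have hK3 : μ ∘ₗ μ.rTensor A
      = μ ∘ₗ μ.lTensor A ∘ₗ ↑(TensorProduct.assoc k A A A) := by
    apply TensorProduct.ext_threefold
    intro x y z
    simp [hμ, LinearMap.mul'_apply, mul_assoc]
  have hs1 : TensorProduct.map (μ ∘ₗ TensorProduct.map σ ω ∘ₗ C) αa
      = μ.rTensor A ∘ₗ TensorProduct.map (TensorProduct.map σ ω) αa ∘ₗ C.rTensor H := by
    apply TensorProduct.ext'
    intro u v
    simp
  have hs5 : μ.lTensor A ∘ₗ TensorProduct.map σ (TensorProduct.map ω αa)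
      = TensorProduct.map σ (μ ∘ₗ TensorProduct.map ω αa) := by
    apply TensorProduct.ext'
    intro u v
    simp
  have hs6 : TensorProduct.map σ (μ ∘ₗ TensorProduct.map ω αa) ∘ₗ C.lTensor H
      = TensorProduct.map σ (μ ∘ₗ TensorProduct.map ω αa ∘ₗ C) := by
    apply TensorProduct.ext'
    intro u v
    simp
  calc sweedler (LinearMap.mul k A) (act.flip ((act g) 1)) αa
      = μ ∘ₗ TensorProduct.map (act.flip ((act g) 1)) αa ∘ₗ C := by
        rw [sweedler_mul_eq]
    _ = μ ∘ₗ TensorProduct.map (μ ∘ₗ TensorProduct.map σ ω ∘ₗ C) αa ∘ₗ C := by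
        rw [hK1]
    _ = μ ∘ₗ (μ.rTensor A ∘ₗ TensorProduct.map (TensorProduct.map σ ω) αa
          ∘ₗ C.rTensor H) ∘ₗ C := by rw [hs1]
    _ = (μ ∘ₗ μ.rTensor A) ∘ₗ TensorProduct.map (TensorProduct.map σ ω) αa
          ∘ₗ (C.rTensor H ∘ₗ C) := by simp only [LinearMap.comp_assoc]
    _ = (μ ∘ₗ μ.lTensor A ∘ₗ ↑(TensorProduct.assoc k A A A))
          ∘ₗ TensorProduct.map (TensorProduct.map σ ω) αa
          ∘ₗ (C.rTensor H ∘ₗ C) := by rw [hK3]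
    _ = (μ ∘ₗ μ.lTensor A)
          ∘ₗ (↑(TensorProduct.assoc k A A A)
              ∘ₗ TensorProduct.map (TensorProduct.map σ ω) αa)
          ∘ₗ (C.rTensor H ∘ₗ C) := by simp only [LinearMap.comp_assoc]
    _ = (μ ∘ₗ μ.lTensor A)
          ∘ₗ (TensorProduct.map σ (TensorProduct.map ω αa)
              ∘ₗ ↑(TensorProduct.assoc k H H H))
          ∘ₗ (C.rTensor H ∘ₗ C) := by rw [← TensorProduct.map_map_comp_assoc_eq]
    _ = μ ∘ₗ (μ.lTensor A ∘ₗ TensorProduct.map σ (TensorProduct.map ω αa))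
          ∘ₗ (↑(TensorProduct.assoc k H H H) ∘ₗ C.rTensor H ∘ₗ C) := by
        simp only [LinearMap.comp_assoc]
    _ = μ ∘ₗ (μ.lTensor A ∘ₗ TensorProduct.map σ (TensorProduct.map ω αa))
          ∘ₗ (C.lTensor H ∘ₗ C) := by rw [Coalgebra.coassoc]
    _ = μ ∘ₗ (TensorProduct.map σ (μ ∘ₗ TensorProduct.map ω αa)
          ∘ₗ C.lTensor H) ∘ₗ C := by
        rw [hs5]; simp only [LinearMap.comp_assoc]
    _ = μ ∘ₗ TensorProduct.map σ (μ ∘ₗ TensorProduct.map ω αa ∘ₗ C) ∘ₗ C := by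
        rw [hs6]
    _ = μ ∘ₗ TensorProduct.map σ αa ∘ₗ C := by rw [hK2]
    _ = sweedler (LinearMap.mul k A) σ αa := by rw [sweedler_mul_eq]

end ActAux2

/-- If `H` acts partially (symmetrically, on the left) on `A`, then
`π : H → End(A)`, `π(h)(a) = h·a`, is a partial representation of `H` in the
endomorphism algebra `End(A)`. -/
theorem leftPartialAction_isPartialRep
    {k H A : Type*} [CommRing k] [Ring H] [HopfAlgebra k H] [Ring A] [Algebra k A]
    (act : H →ₗ[k] A →ₗ[k] A) (hact : IsLeftPartialAction k act) :
    IsPartialRep k (act : H →ₗ[k] Module.End k A) := by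
  constructor
  · -- PR1
    apply LinearMap.ext
    intro a
    simpa using hact.lpa1 a
  · -- PR2
    intro h kk
    apply LinearMap.ext
    intro a
    have l := DFunLike.congr_fun (coreMapL act hact h a)
      (Coalgebra.comul (R := k) kk)
    have r := DFunLike.congr_fun (coreMapR act hact h a)
      (Coalgebra.comul (R := k) kk)
    simp only [LinearMap.comp_apply, LinearMap.applyₗ_apply_apply] at l r
    simp only [sweedler, LinearMap.comp_apply]
    rw [l, r]
    have dmul := DFunLike.congr_fun (Dmap_comp_mulLeft (k := k) h)
      (Coalgebra.comul (R := k) kk)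
    simp only [LinearMap.comp_apply, LinearMap.mulLeft_apply] at dmul
    rw [dmul, Dmap_comul_apply]
    simp only [TensorProduct.map_tmul, LinearMap.flip_apply, hact.lpa1 a,
      LinearMap.mul'_apply]
    rw [hact.lpa2 h ((act kk) 1) a, lemK act hact kk a, sweedler_mul_apply,
      map_comp_rTensor', LinearMap.comp_apply, rTensor_mulRight_eq]
  · -- PR3
    intro h g
    apply LinearMap.ext
    intro a
    have l := DFunLike.congr_fun (coreMap0 act hact ((act g) a))
      (Coalgebra.comul (R := k) h)
    have r := DFunLike.congr_fun (coreMapG act hact g a)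
      (Coalgebra.comul (R := k) h)
    simp only [LinearMap.comp_apply, LinearMap.applyₗ_apply_apply] at l r
    simp only [sweedler, LinearMap.comp_apply, Module.End.mul_apply]
    rw [l, r, Dmap_comul_apply]
    simp only [TensorProduct.map_tmul, LinearMap.flip_apply, LinearMap.comp_apply,
      LinearMap.mulRight_apply, one_mul, hact.lpa1, LinearMap.mul'_apply]
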